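/- Let {R_k} be a strictly increasing sequence of positive reals with R_k → ∞, and let {V_k} be open subsets of a topological space M with V_k ⊆ V_{k+1}, each V_k homeomorphic (diffeomorphic) to ℝⁿ, and M = ⋃_k V_k. Then M is homeomorphic (diffeomorphic) to ℝⁿ. (Brown's theorem on increasing unions of Euclidean open sets, used in the proof of Theorem 3.1.) -/

import Mathlib

open Filter Topology


open Filter Topology Set Metric

noncomputable section

namespace BrownAux

/-! ### Piecewise linear profile function -/

/-- A piecewise linear increasing bijection of `ℝ` which is the identity on `(-∞, a]`
and on `[s+1, ∞)`, and maps `(-∞, s]` into `(-∞, b]`. -/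
def plFun (a b s t : ℝ) : ℝ :=
  min (max (a + (b - a) / (s - a) * (t - a)) (b + (s + 1 - b) * (t - s))) t

variable {a b s t : ℝ}

lemma plFun_strictMono (hab : a < b) (hbs : b ≤ s) : StrictMono (plFun a b s) := by
  have hsa : 0 < s - a := by linarith
  have hl : 0 < (b - a) / (s - a) := div_pos (by linarith) hsa
  intro x y hxy
  unfold plFun
  refine min_lt_min (max_lt_max ?_ ?_) hxy
  · nlinarith
  · nlinarith

lemma plFun_continuous (a b s : ℝ) : Continuous (plFun a b s) := by
  unfold plFun; fun_prop

lemma plFun_of_le (hab : a < b) (hbs : b ≤ s) (ht : t ≤ a) : plFun a b s t = t := by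
  have hsa : 0 < s - a := by linarith
  have hl1 : (b - a) / (s - a) ≤ 1 := by
    rw [div_le_one hsa]; linarith
  have hL : t ≤ a + (b - a) / (s - a) * (t - a) := by nlinarith
  exact min_eq_right (le_max_of_le_left hL)

lemma plFun_of_ge (hab : a < b) (hbs : b ≤ s) (ht : s + 1 ≤ t) : plFun a b s t = t := by
  have hM : t ≤ b + (s + 1 - b) * (t - s) := by nlinarith
  exact min_eq_right (le_max_of_le_right hM)

lemma plFun_le_of_le (hab : a < b) (hbs : b ≤ s) (ht : t ≤ s) : plFun a b s t ≤ b := by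
  have hsa : 0 < s - a := by linarith
  have hl : 0 < (b - a) / (s - a) := div_pos (by linarith) hsa
  have hL : a + (b - a) / (s - a) * (t - a) ≤ b := by
    have : a + (b - a) / (s - a) * (s - a) = b := by field_simp; ring
    nlinarith
  have hM : b + (s + 1 - b) * (t - s) ≤ b := by nlinarith
  exact le_trans (min_le_left _ _) (max_le hL hM)

lemma plFun_surjective (hab : a < b) (hbs : b ≤ s) : Function.Surjective (plFun a b s) := by
  apply Continuous.surjective (plFun_continuous a b s)
  · apply Tendsto.congr' _ tendsto_id
    filter_upwards [eventually_ge_atTop (s + 1)] with t ht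
    exact (plFun_of_ge hab hbs ht).symm
  · apply Tendsto.congr' _ tendsto_id
    filter_upwards [eventually_le_atBot a] with t ht
    exact (plFun_of_le hab hbs ht).symm

/-- The piecewise linear profile as an order isomorphism of `ℝ`. -/
def plIso (hab : a < b) (hbs : b ≤ s) : ℝ ≃o ℝ :=
  StrictMono.orderIsoOfSurjective _ (plFun_strictMono hab hbs) (plFun_surjective hab hbs)

lemma plIso_apply (hab : a < b) (hbs : b ≤ s) (t : ℝ) : plIso hab hbs t = plFun a b s t := rfl

lemma plIso_of_le (hab : a < b) (hbs : b ≤ s) (ht : t ≤ a) : plIso hab hbs t = t :=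
  plFun_of_le hab hbs ht

lemma plIso_of_ge (hab : a < b) (hbs : b ≤ s) (ht : s + 1 ≤ t) : plIso hab hbs t = t :=
  plFun_of_ge hab hbs ht

lemma plIso_symm_of_le (hab : a < b) (hbs : b ≤ s) (ht : t ≤ a) :
    (plIso hab hbs).symm t = t := by
  conv_lhs => rw [← plIso_of_le hab hbs ht]
  exact (plIso hab hbs).symm_apply_apply t

lemma plIso_symm_of_ge (hab : a < b) (hbs : b ≤ s) (ht : s + 1 ≤ t) :
    (plIso hab hbs).symm t = t := by
  conv_lhs => rw [← plIso_of_ge hab hbs ht]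
  exact (plIso hab hbs).symm_apply_apply t

end BrownAux

noncomputable section

namespace BrownAux2

variable {E : Type*} [NormedAddCommGroup E] [NormedSpace ℝ E]

/-- Radial map determined by a profile function `g`. -/
def rad (c : E) (g : ℝ → ℝ) (x : E) : E :=
  c + (g ‖x - c‖ / ‖x - c‖) • (x - c)

lemma rad_self (c : E) (g : ℝ → ℝ) : rad c g c = c := by simp [rad]

variable (G : ℝ ≃o ℝ) {c x : E}

lemma orderIso_nonneg (hG0 : G 0 = 0) {t : ℝ} (ht : 0 ≤ t) : 0 ≤ G t := by
  have := G.monotone ht; rwa [hG0] at this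

lemma norm_rad (hG0 : G 0 = 0) (c x : E) : ‖rad c ⇑G x - c‖ = G ‖x - c‖ := by
  rcases eq_or_ne x c with rfl | hxc
  · simp [rad_self, hG0]
  · have ht : 0 < ‖x - c‖ := by
      rw [norm_pos_iff]; exact sub_ne_zero_of_ne hxc
    have hGt : 0 ≤ G ‖x - c‖ := orderIso_nonneg G hG0 ht.le
    rw [rad, add_sub_cancel_left, norm_smul, Real.norm_eq_abs,
      abs_of_nonneg (div_nonneg hGt ht.le), div_mul_cancel₀ _ ht.ne']

lemma rad_eq_self (g : ℝ → ℝ) (h : g ‖x - c‖ = ‖x - c‖) : rad c g x = x := by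
  rcases eq_or_ne x c with rfl | hxc
  · exact rad_self _ g
  · have ht : ‖x - c‖ ≠ 0 := by
      rw [norm_ne_zero_iff]; exact sub_ne_zero_of_ne hxc
    rw [rad, h, div_self ht, one_smul, add_sub_cancel]

lemma rad_rad (hG0 : G 0 = 0) (c x : E) : rad c ⇑G.symm (rad c ⇑G x) = x := by
  rcases eq_or_ne x c with rfl | hxc
  · rw [rad_self, rad_self]
  · have ht : 0 < ‖x - c‖ := by
      rw [norm_pos_iff]; exact sub_ne_zero_of_ne hxc
    have hGt : 0 < G ‖x - c‖ := by
      rcases (orderIso_nonneg G hG0 ht.le).lt_or_eq with h | h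
      · exact h
      · exfalso
        have : G ‖x - c‖ = G 0 := by rw [hG0, ← h]
        exact ht.ne' (G.injective this)
    have hy : rad c ⇑G x - c = (G ‖x - c‖ / ‖x - c‖) • (x - c) := by
      rw [rad, add_sub_cancel_left]
    rw [rad, norm_rad G hG0, G.symm_apply_apply, hy, smul_smul]
    rw [div_mul_div_comm, mul_comm (G ‖x - c‖), div_self (by positivity), one_smul,
      add_sub_cancel]

lemma continuous_rad {a : ℝ} (ha : 0 < a) (hGa : ∀ t ≤ a, G t = t) :
    Continuous (rad c ⇑G) := by
  rw [continuous_iff_continuousAt]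
  intro x
  rcases lt_or_ge ‖x - c‖ a with hx | hx
  · have hmem : {y : E | ‖y - c‖ < a} ∈ 𝓝 x := by
      have : IsOpen {y : E | ‖y - c‖ < a} := by
        have : Continuous fun y : E => ‖y - c‖ := by fun_prop
        exact isOpen_lt this continuous_const
      exact this.mem_nhds hx
    refine continuousAt_id.congr ?_
    filter_upwards [hmem] with y hy
    exact (rad_eq_self _ (hGa _ hy.le)).symm
  · have hxc : ‖x - c‖ ≠ 0 := (ha.trans_le hx).ne'
    have h1 : ContinuousAt (fun y : E => ‖y - c‖) x := by fun_prop
    have h2 : ContinuousAt (fun y : E => G ‖y - c‖) x :=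
      G.continuous.continuousAt.comp h1
    have h3 : ContinuousAt (fun y : E => y - c) x := by fun_prop
    exact continuousAt_const.add (((h2.div h1 hxc).smul h3))

/-- The radial squeeze homeomorphism: identity on the closed ball of radius `a` around `c`
and outside the ball of radius `s + 1`; maps the closed ball of radius `s` into the closed
ball of radius `b`. -/
def radialHomeo (c : E) {a b s : ℝ} (h0 : 0 < a) (hab : a < b) (hbs : b ≤ s) : E ≃ₜ E where
  toFun := rad c ⇑(BrownAux.plIso hab hbs)
  invFun := rad c ⇑(BrownAux.plIso hab hbs).symm
  left_inv x := rad_rad _ (BrownAux.plIso_of_le hab hbs h0.le) c x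
  right_inv x := by
    have h := rad_rad (BrownAux.plIso hab hbs).symm
      (BrownAux.plIso_symm_of_le hab hbs h0.le) c x
    rwa [OrderIso.symm_symm] at h
  continuous_toFun := continuous_rad _ h0 (fun t ht => BrownAux.plIso_of_le hab hbs ht)
  continuous_invFun := continuous_rad _ h0 (fun t ht => BrownAux.plIso_symm_of_le hab hbs ht)

variable {a b s : ℝ} (h0 : 0 < a) (hab : a < b) (hbs : b ≤ s)

lemma radialHomeo_fix_inner (hx : ‖x - c‖ ≤ a) : radialHomeo c h0 hab hbs x = x :=
  rad_eq_self _ (BrownAux.plIso_of_le hab hbs hx)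

lemma radialHomeo_fix_outer (hx : s + 1 ≤ ‖x - c‖) : radialHomeo c h0 hab hbs x = x :=
  rad_eq_self _ (BrownAux.plIso_of_ge hab hbs hx)

lemma radialHomeo_symm_fix_outer (hx : s + 1 ≤ ‖x - c‖) :
    (radialHomeo c h0 hab hbs).symm x = x :=
  rad_eq_self _ (BrownAux.plIso_symm_of_ge hab hbs hx)

lemma radialHomeo_squeeze (hx : ‖x - c‖ ≤ s) :
    ‖radialHomeo c h0 hab hbs x - c‖ ≤ b := by
  have h := norm_rad (BrownAux.plIso hab hbs) (BrownAux.plIso_of_le hab hbs h0.le) c x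
  calc ‖radialHomeo c h0 hab hbs x - c‖ = BrownAux.plIso hab hbs ‖x - c‖ := h
    _ ≤ b := BrownAux.plFun_le_of_le hab hbs hx

end BrownAux2

noncomputable section

namespace BrownAux3

open Topology

variable {E : Type*} [TopologicalSpace E] {M : Type*} [TopologicalSpace M]

/-- Extend a homeomorphism of `E` with support in a compact set along an open embedding
`f : E → M`, to a homeomorphism of `M` (assuming `M` Hausdorff). -/
theorem extend_exists [Nonempty E] [T2Space M] {f : E → M} (hf : IsOpenEmbedding f)
    (S : E ≃ₜ E) {D : Set E} (hD : IsCompact D)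
    (hS : ∀ z ∉ D, S z = z) (hS' : ∀ z ∉ D, S.symm z = z) :
    ∃ H : M ≃ₜ M, (∀ y : E, H (f y) = f (S y)) ∧ (∀ x ∉ f '' D, H x = x) := by
  classical
  set e := hf.toPartialHomeomorph f with he
  have hsrc : e.source = univ := hf.toPartialHomeomorph_source f
  have htgt : e.target = range f := hf.toPartialHomeomorph_target f
  have hφf : ∀ y : E, e.symm (f y) = y := fun y => hf.toPartialHomeomorph_left_inv f
  have hfφ : ∀ x ∈ range f, f (e.symm x) = x := fun x hx =>
    hf.toPartialHomeomorph_right_inv f hx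
  set F : (E → E) → M → M := fun T x => if x ∈ range f then f (T (e.symm x)) else x with hF
  have hF1 : ∀ (T : E → E) (y : E), F T (f y) = f (T y) := by
    intro T y
    simp only [hF, if_pos (mem_range_self y), hφf]
  have hF2 : ∀ (T : E → E) (x : M), x ∉ range f → F T x = x := by
    intro T x hx; simp only [hF, if_neg hx]
  have hFid : ∀ (T : E → E), (∀ z ∉ D, T z = z) → ∀ x ∉ f '' D, F T x = x := by
    intro T hT x hx
    by_cases hxr : x ∈ range f
    · obtain ⟨z, rfl⟩ := hxr
      have hz : z ∉ D := fun h => hx ⟨z, h, rfl⟩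
      rw [hF1, hT z hz]
    · exact hF2 T x hxr
  have hcont : ∀ (T : E → E), Continuous T → (∀ z ∉ D, T z = z) → Continuous (F T) := by
    intro T hTc hT
    rw [continuous_iff_continuousAt]
    intro x
    by_cases hx : x ∈ range f
    · have hCA : ContinuousAt (fun y => f (T (e.symm y))) x := by
        have hsymm : ContinuousAt e.symm x := by
          apply e.symm.continuousOn.continuousAt (IsOpen.mem_nhds (by rw [PartialHomeomorph.symm_source, htgt]; exact hf.isOpen_range) ?_)
          rw [PartialHomeomorph.symm_source, htgt]; exact hx
        exact hf.continuous.continuousAt.comp (hTc.continuousAt.comp hsymm)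
      refine hCA.congr ?_
      filter_upwards [hf.isOpen_range.mem_nhds hx] with y hy
      simp only [hF, if_pos hy]
    · have hclosed : IsClosed (f '' D) := (hD.image hf.continuous).isClosed
      have hx2 : x ∈ (f '' D)ᶜ := fun hmem => hx (image_subset_range _ _ hmem)
      refine continuousAt_id.congr ?_
      filter_upwards [hclosed.isOpen_compl.mem_nhds hx2] with y hy
      exact (hFid T hT y hy).symm
  have left_inv : ∀ x, F ⇑S.symm (F ⇑S x) = x := by
    intro x
    by_cases hx : x ∈ range f
    · obtain ⟨y, rfl⟩ := hx
      rw [hF1, hF1, S.symm_apply_apply]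
    · rw [hF2 _ _ hx, hF2 _ _ hx]
  have right_inv : ∀ x, F ⇑S (F ⇑S.symm x) = x := by
    intro x
    by_cases hx : x ∈ range f
    · obtain ⟨y, rfl⟩ := hx
      rw [hF1, hF1, S.apply_symm_apply]
    · rw [hF2 _ _ hx, hF2 _ _ hx]
  refine ⟨⟨⟨F ⇑S, F ⇑S.symm, left_inv, right_inv⟩,
      hcont _ S.continuous hS, hcont _ S.symm.continuous hS'⟩, hF1 ⇑S, hFid ⇑S hS⟩

/-- The preimage of a compact subset of the range of an open embedding is compact. -/
theorem isCompact_preimage [Nonempty E] {f : E → M} (hf : IsOpenEmbedding f)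
    {Q : Set M} (hQ : IsCompact Q) (hQr : Q ⊆ range f) : IsCompact (f ⁻¹' Q) := by
  set e := hf.toPartialHomeomorph f
  have htgt : e.target = range f := hf.toPartialHomeomorph_target f
  have him : f ⁻¹' Q = e.symm '' Q := by
    ext y
    constructor
    · intro hy
      exact ⟨f y, hy, hf.toPartialHomeomorph_left_inv f⟩
    · rintro ⟨x, hx, rfl⟩
      have : f (e.symm x) = x := hf.toPartialHomeomorph_right_inv f (hQr hx)
      simpa [mem_preimage, this] using hx
  rw [him]
  exact hQ.image_of_continuousOn (e.symm.continuousOn.mono (by rw [PartialHomeomorph.symm_source, htgt]; exact hQr))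

theorem homeomorph_symm_fix (h : M ≃ₜ M) {A : Set M} (hfix : ∀ x ∉ A, h x = x) :
    ∀ x ∉ A, h.symm x = x := by
  intro x hx
  conv_lhs => rw [← hfix x hx]
  exact h.symm_apply_apply x

theorem homeomorph_fix_maps (h : M ≃ₜ M) {A B : Set M} (hAB : A ⊆ B)
    (hfix : ∀ x ∉ A, h x = x) : ∀ x ∈ B, h x ∈ B := by
  intro x hx
  by_contra hc
  have h1 : h x ∉ A := fun hA => hc (hAB hA)
  have h2 : h.symm (h x) = h x := homeomorph_symm_fix h hfix _ h1
  rw [h.symm_apply_apply] at h2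
  exact hc (h2 ▸ hx)

variable {E : Type*} [NormedAddCommGroup E] [NormedSpace ℝ E] [ProperSpace E] [Nonempty E]
variable [T2Space M]

/-- Move a compact subset of an open cell into any given nonempty open subset, by a
homeomorphism of `M` fixing the complement of the cell. -/
theorem squeeze_exists {f : E → M} (hf : IsOpenEmbedding f)
    {K : Set M} (hK : IsCompact K) (hKr : K ⊆ range f)
    {O : Set M} (hO : IsOpen O) (hOne : O.Nonempty) (hOr : O ⊆ range f) :
    ∃ α : M ≃ₜ M, (∀ x ∈ K, α x ∈ O) ∧ (∀ x ∉ range f, α x = x) := by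
  obtain ⟨o, ho⟩ := hOne
  obtain ⟨c₁, rfl⟩ := hOr ho
  have hpre : IsOpen (f ⁻¹' O) := hO.preimage hf.continuous
  obtain ⟨ε, hε, hball⟩ := Metric.isOpen_iff.1 hpre c₁ ho
  obtain ⟨r₁, hr₁⟩ := (isCompact_preimage hf hK hKr).isBounded.subset_closedBall c₁
  have h0 : (0:ℝ) < ε/3 := by linarith
  have hab : ε/3 < ε/2 := by linarith
  have hbs : ε/2 ≤ max (ε/2) r₁ := le_max_left _ _
  set s := max (ε/2) r₁ with hs
  set S := BrownAux2.radialHomeo c₁ h0 hab hbs with hS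
  have hDfix : ∀ z ∉ closedBall c₁ (s + 1), S z = z := by
    intro z hz
    rw [mem_closedBall, dist_eq_norm, not_le] at hz
    exact BrownAux2.radialHomeo_fix_outer h0 hab hbs hz.le
  have hDfix' : ∀ z ∉ closedBall c₁ (s + 1), S.symm z = z := by
    intro z hz
    rw [mem_closedBall, dist_eq_norm, not_le] at hz
    exact BrownAux2.radialHomeo_symm_fix_outer h0 hab hbs hz.le
  obtain ⟨H, hH1, hH2⟩ := extend_exists hf S (isCompact_closedBall c₁ (s+1)) hDfix hDfix'
  refine ⟨H, ?_, ?_⟩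
  · intro x hx
    obtain ⟨z, rfl⟩ := hKr hx
    have hz : z ∈ closedBall c₁ s := by
      have : z ∈ f ⁻¹' K := hx
      exact closedBall_subset_closedBall (le_max_right _ _) (hr₁ this)
    rw [mem_closedBall, dist_eq_norm] at hz
    have hsq : ‖S z - c₁‖ ≤ ε/2 := BrownAux2.radialHomeo_squeeze h0 hab hbs hz
    have : S z ∈ ball c₁ ε := by
      rw [mem_ball, dist_eq_norm]; linarith
    rw [hH1]
    exact hball this
  · intro x hx
    exact hH2 x (fun hmem => hx (image_subset_range _ _ hmem))

/-- Brown's engulfing lemma: for open cells `range f ⊆ range g` in `M`, a compact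
`K ⊆ range f` and a compact `L ⊆ range g`, there is a homeomorphism of `M` fixing `K`
and the complement of `range g`, which moves `L` into `range f`. -/
theorem brown_lemma {f g : E → M} (hf : IsOpenEmbedding f) (hg : IsOpenEmbedding g)
    (hfg : range f ⊆ range g)
    {K : Set M} (hK : IsCompact K) (hKf : K ⊆ range f)
    {L : Set M} (hL : IsCompact L) (hLg : L ⊆ range g) :
    ∃ h : M ≃ₜ M, (∀ x ∈ K, h x = x) ∧ (∀ x ∈ L, h x ∈ range f) ∧
      (∀ x ∉ range g, h x = x) := by
  obtain ⟨c₀⟩ := ‹Nonempty E›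
  set p := f c₀ with hp
  have hpf : p ∈ range f := mem_range_self c₀
  have hpg : p ∈ range g := hfg hpf
  have hgc' : g ((hg.toPartialHomeomorph g).symm p) = p := hg.toPartialHomeomorph_right_inv g hpg
  set c' := (hg.toPartialHomeomorph g).symm p with hc'
  have hopen2 : IsOpen (g ⁻¹' range f) := hf.isOpen_range.preimage hg.continuous
  have hc'mem : c' ∈ g ⁻¹' range f := by rw [mem_preimage, hgc']; exact hpf
  obtain ⟨ε, hε, hball⟩ := Metric.isOpen_iff.1 hopen2 c' hc'mem
  -- first squeeze: move K into a small ball around p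
  have hOopen : IsOpen (range f ∩ g '' ball c' (ε/2)) :=
    hf.isOpen_range.inter (hg.isOpenMap _ isOpen_ball)
  have hOne : (range f ∩ g '' ball c' (ε/2)).Nonempty :=
    ⟨p, hpf, ⟨c', mem_ball_self (by linarith), hgc'⟩⟩
  obtain ⟨α, hα1, hα2⟩ := squeeze_exists hf hK hKf hOopen hOne inter_subset_left
  -- the compact set g⁻¹(α '' L)
  have hαL : IsCompact (α '' L) := hL.image α.continuous
  have hαLg : α '' L ⊆ range g := by
    rintro x ⟨y, hy, rfl⟩
    exact homeomorph_fix_maps α hfg hα2 y (hLg hy)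
  obtain ⟨r₂, hr₂⟩ := (isCompact_preimage hg hαL hαLg).isBounded.subset_closedBall c'
  have h0 : (0:ℝ) < ε/2 := by linarith
  have hab : ε/2 < 3*ε/4 := by linarith
  have hbs : 3*ε/4 ≤ max (3*ε/4) r₂ := le_max_left _ _
  set s := max (3*ε/4) r₂ with hs
  set S₂ := BrownAux2.radialHomeo c' h0 hab hbs with hS₂
  have hDfix : ∀ z ∉ closedBall c' (s + 1), S₂ z = z := by
    intro z hz
    rw [mem_closedBall, dist_eq_norm, not_le] at hz
    exact BrownAux2.radialHomeo_fix_outer h0 hab hbs hz.le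
  have hDfix' : ∀ z ∉ closedBall c' (s + 1), S₂.symm z = z := by
    intro z hz
    rw [mem_closedBall, dist_eq_norm, not_le] at hz
    exact BrownAux2.radialHomeo_symm_fix_outer h0 hab hbs hz.le
  obtain ⟨σ, hσ1, hσ2⟩ := extend_exists hg S₂ (isCompact_closedBall c' (s+1)) hDfix hDfix'
  refine ⟨α.trans (σ.trans α.symm), ?_, ?_, ?_⟩
  · -- fixes K
    intro x hx
    have hαx := hα1 x hx
    obtain ⟨z, hz, hgz⟩ := hαx.2
    have hz2 : ‖z - c'‖ ≤ ε/2 := by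
      rw [mem_ball, dist_eq_norm] at hz; exact hz.le
    have hfix : S₂ z = z := BrownAux2.radialHomeo_fix_inner h0 hab hbs hz2
    simp only [Homeomorph.trans_apply]
    rw [← hgz, hσ1, hfix, hgz, Homeomorph.symm_apply_apply]
  · -- moves L into range f
    intro x hx
    have hαx : α x ∈ α '' L := mem_image_of_mem α hx
    obtain ⟨z, hgz⟩ := hαLg hαx
    have hzL : z ∈ g ⁻¹' (α '' L) := by rw [mem_preimage, hgz]; exact hαx
    have hzs : ‖z - c'‖ ≤ s := by
      have := hr₂ hzL
      rw [mem_closedBall, dist_eq_norm] at this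
      exact le_trans this (le_max_right _ _)
    have hsq : ‖S₂ z - c'‖ ≤ 3*ε/4 := BrownAux2.radialHomeo_squeeze h0 hab hbs hzs
    have hSzf : g (S₂ z) ∈ range f := by
      apply hball
      rw [mem_ball, dist_eq_norm]; linarith
    simp only [Homeomorph.trans_apply]
    rw [← hgz, hσ1]
    exact homeomorph_fix_maps α.symm (subset_refl (range f))
      (homeomorph_symm_fix α hα2) _ hSzf
  · -- fixes complement of range g
    intro x hx
    have hxf : x ∉ range f := fun h => hx (hfg h)
    have h1 : α x = x := hα2 x hxf
    have h2 : σ x = x := hσ2 x (fun hmem => hx (image_subset_range _ _ hmem))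
    simp only [Homeomorph.trans_apply]
    rw [h1, h2]
    conv_lhs => rw [← h1]
    exact α.symm_apply_apply x

end BrownAux3


namespace BrownAux4

/-- Dependent recursive choice. -/
theorem dep_choice {Data : Type*} (P : ℕ → Data → Prop) (Q : ℕ → Data → Data → Prop)
    (d0 : Data) (h0 : P 0 d0)
    (step : ∀ k d, P k d → ∃ d', P (k + 1) d' ∧ Q k d d') :
    ∃ st : ℕ → Data, (∀ k, P k (st k)) ∧ ∀ k, Q k (st k) (st (k + 1)) := by
  choose next hP hQ using step
  let aux : ∀ k : ℕ, {d : Data // P k d} := fun k =>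
    Nat.rec ⟨d0, h0⟩ (fun k prev => ⟨next k prev.1 prev.2, hP k prev.1 prev.2⟩) k
  exact ⟨fun k => (aux k).1, fun k => (aux k).2, fun k => hQ k (aux k).1 (aux k).2⟩

end BrownAux4


/-- Brown's theorem on increasing unions, as used in the proof of Theorem 3.1:
if `{R_k}` is a strictly increasing sequence of positive reals with `R_k → ∞` and
`{V_k}` is an increasing sequence of open subsets of `M`, each homeomorphic to `ℝⁿ`,
with `M = ⋃_k V_k`, then `M` is homeomorphic to `ℝⁿ`. -/
theorem brown_increasing_union (n : ℕ) {M : Type*} [TopologicalSpace M]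
    (R : ℕ → ℝ) (hRpos : ∀ k, 0 < R k) (hRmono : StrictMono R)
    (hRinf : Tendsto R atTop atTop)
    (V : ℕ → Set M) (hopen : ∀ k, IsOpen (V k))
    (hmono : ∀ k, V k ⊆ V (k + 1))
    (hunion : (⋃ k, V k) = Set.univ)
    (hhomeo : ∀ k, Nonempty (V k ≃ₜ EuclideanSpace ℝ (Fin n))) :
    Nonempty (M ≃ₜ EuclideanSpace ℝ (Fin n)) := by
  classical
  set E := EuclideanSpace ℝ (Fin n) with hE
  have hVmono : Monotone V := monotone_nat_of_le_succ hmono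
  -- charts
  set ψ : ℕ → E → M := fun k y => (((hhomeo k).some.symm y : V k) : M) with hψdef
  have hψ : ∀ k, IsOpenEmbedding (ψ k) := fun k =>
    (hopen k).isOpenEmbedding_subtypeVal.comp (hhomeo k).some.symm.isOpenEmbedding
  have hψrange : ∀ k, range (ψ k) = V k := by
    intro k
    ext x
    constructor
    · rintro ⟨y, rfl⟩
      exact ((hhomeo k).some.symm y).2
    · intro hx
      refine ⟨(hhomeo k).some ⟨x, hx⟩, ?_⟩
      simp only [hψdef, Homeomorph.symm_apply_apply]
  -- Hausdorff
  haveI hT2 : T2Space M := by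
    refine ⟨fun x y hxy => ?_⟩
    obtain ⟨j, hj⟩ := mem_iUnion.1 (hunion ▸ mem_univ x : x ∈ ⋃ k, V k)
    obtain ⟨k, hk⟩ := mem_iUnion.1 (hunion ▸ mem_univ y : y ∈ ⋃ k, V k)
    have hxm : x ∈ V (max j k) := hVmono (le_max_left j k) hj
    have hym : y ∈ V (max j k) := hVmono (le_max_right j k) hk
    rw [← hψrange (max j k)] at hxm hym
    obtain ⟨a, rfl⟩ := hxm
    obtain ⟨b, rfl⟩ := hym
    have hne : a ≠ b := fun h => hxy (by rw [h])
    obtain ⟨u, v, hu, hv, hau, hbv, huv⟩ := t2_separation hne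
    exact ⟨ψ (max j k) '' u, ψ (max j k) '' v, (hψ _).isOpenMap _ hu, (hψ _).isOpenMap _ hv,
      mem_image_of_mem _ hau, mem_image_of_mem _ hbv,
      (Set.disjoint_image_iff (hψ _).injective).2 huv⟩
  -- compact exhaustion
  set C : ℕ → Set M := fun k => ⋃ j : Fin (k + 1), ψ j '' closedBall 0 k with hCdef
  have hCcompact : ∀ k, IsCompact (C k) :=
    fun k => isCompact_iUnion fun j => (isCompact_closedBall _ _).image (hψ j).continuous
  have hCsub : ∀ k, C k ⊆ V k := by
    intro k x hx
    obtain ⟨j, hj⟩ := mem_iUnion.1 hx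
    have hxr : x ∈ range (ψ j) := image_subset_range _ _ hj
    rw [hψrange] at hxr
    exact hVmono (Nat.lt_succ_iff.1 j.2) hxr
  have hCcover : ∀ x : M, ∃ m, x ∈ C m := by
    intro x
    obtain ⟨j, hj⟩ := mem_iUnion.1 (hunion ▸ mem_univ x : x ∈ ⋃ k, V k)
    rw [← hψrange j] at hj
    obtain ⟨y, rfl⟩ := hj
    refine ⟨max j ⌈‖y‖⌉₊,
      mem_iUnion.2 ⟨⟨j, by have := le_max_left j ⌈‖y‖⌉₊; omega⟩, ⟨y, ?_, rfl⟩⟩⟩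
    rw [mem_closedBall, dist_zero_right]
    calc ‖y‖ ≤ (⌈‖y‖⌉₊ : ℝ) := Nat.le_ceil _
      _ ≤ ((max j ⌈‖y‖⌉₊ : ℕ) : ℝ) := by exact_mod_cast le_max_right j ⌈‖y‖⌉₊
  -- the inductive construction
  set P : ℕ → (E → M) × Set M × ℝ → Prop := fun k d =>
    IsOpenEmbedding d.1 ∧ range d.1 ⊆ V k ∧ IsCompact d.2.1 ∧ C k ⊆ d.2.1 ∧
      d.2.1 ⊆ d.1 '' ball 0 d.2.2 ∧ ((k : ℝ) + 1) ≤ d.2.2 with hPdef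
  set Q : ℕ → (E → M) × Set M × ℝ → (E → M) × Set M × ℝ → Prop := fun _ d d' =>
    (∀ y : E, ‖y‖ ≤ d.2.2 → d'.1 y = d.1 y) ∧ d.2.2 + 1 ≤ d'.2.2 with hQdef
  have hbase : ∃ ρ0 : ℝ, P 0 (ψ 0, C 0, ρ0) := by
    have hC0r : C 0 ⊆ range (ψ 0) := by rw [hψrange]; exact hCsub 0
    obtain ⟨r, hr⟩ :=
      (BrownAux3.isCompact_preimage (hψ 0) (hCcompact 0) hC0r).isBounded.subset_closedBall 0
    refine ⟨max (r + 1) 1, hψ 0, by rw [hψrange], hCcompact 0, subset_rfl, ?_, ?_⟩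
    · intro x hx
      obtain ⟨y, rfl⟩ := hC0r hx
      refine ⟨y, ?_, rfl⟩
      have hy := hr (show y ∈ ψ 0 ⁻¹' C 0 from hx)
      rw [mem_closedBall] at hy
      rw [mem_ball]
      calc dist y 0 ≤ r := hy
        _ < max (r + 1) 1 := lt_of_lt_of_le (by linarith) (le_max_left _ _)
    · simpa using le_max_right (r + 1) (1 : ℝ)
  have hstep : ∀ k d, P k d → ∃ d', P (k + 1) d' ∧ Q k d d' := by
    rintro k ⟨e, K, ρ⟩ ⟨he, her, hKc, hCK, hKb, hρ⟩
    dsimp only at he her hKc hCK hKb hρ ⊢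
    set T := e '' closedBall 0 ρ with hT
    have hTc : IsCompact T := (isCompact_closedBall _ _).image he.continuous
    have hTr : T ⊆ range e := image_subset_range _ _
    have herV : range e ⊆ V (k + 1) := her.trans (hmono k)
    have hgr : range (ψ (k + 1)) = V (k + 1) := hψrange (k + 1)
    have hLc : IsCompact (C (k + 1) ∪ T) := (hCcompact (k + 1)).union hTc
    have hLg : C (k + 1) ∪ T ⊆ range (ψ (k + 1)) := by
      rw [hgr]; exact union_subset (hCsub (k + 1)) (hTr.trans herV)
    obtain ⟨h, hh1, hh2, hh3⟩ := BrownAux3.brown_lemma he (hψ (k + 1))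
      (by rw [hgr]; exact herV) hTc hTr hLc hLg
    set e' : E → M := fun y => h.symm (e y) with he'def
    have he' : IsOpenEmbedding e' := h.symm.isOpenEmbedding.comp he
    have he'range : range e' ⊆ V (k + 1) := by
      rintro x ⟨y, rfl⟩
      by_contra hc
      have h3 : h (e' y) = e' y := hh3 _ (by rw [hgr]; exact hc)
      have h4 : h (e' y) = e y := h.apply_symm_apply (e y)
      have h5 : e' y = e y := by rw [← h3, h4]
      exact hc (by rw [h5]; exact herV (mem_range_self y))
    have hhL : IsCompact (h '' (C (k + 1) ∪ T)) := hLc.image h.continuous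
    have hhLr : h '' (C (k + 1) ∪ T) ⊆ range e := by
      rintro x ⟨z, hz, rfl⟩; exact hh2 z hz
    obtain ⟨r', hr'⟩ :=
      (BrownAux3.isCompact_preimage he hhL hhLr).isBounded.subset_closedBall 0
    refine ⟨(e', C (k + 1) ∪ T, max (r' + 1) (max (ρ + 1) ((k : ℝ) + 2))),
      ⟨he', he'range, hLc, subset_union_left, ?_, ?_⟩, ?_, ?_⟩
    · intro x hx
      obtain ⟨y, hy⟩ := hh2 x hx
      refine ⟨y, ?_, ?_⟩
      · have hy2 : y ∈ e ⁻¹' (h '' (C (k + 1) ∪ T)) := by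
          rw [mem_preimage, hy]; exact mem_image_of_mem h hx
        have hy3 := hr' hy2
        rw [mem_closedBall] at hy3
        rw [mem_ball]
        calc dist y 0 ≤ r' := hy3
          _ < max (r' + 1) _ := lt_of_lt_of_le (by linarith) (le_max_left _ _)
      · show h.symm (e y) = x
        rw [hy, Homeomorph.symm_apply_apply]
    · have hcast : ((k + 1 : ℕ) : ℝ) + 1 = (k : ℝ) + 2 := by push_cast; ring
      rw [hcast]
      exact le_trans (le_max_right _ _) (le_max_right _ _)
    · intro y hy
      have hyT : e y ∈ T := ⟨y, by rwa [mem_closedBall, dist_zero_right], rfl⟩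
      have h1 := hh1 _ hyT
      show h.symm (e y) = e y
      conv_lhs => rw [← h1]
      exact h.symm_apply_apply (e y)
    · dsimp only
      exact le_trans (le_max_left _ _) (le_max_right _ _)
  obtain ⟨ρ0, hbase'⟩ := hbase
  obtain ⟨st, hP, hQ⟩ := BrownAux4.dep_choice P Q (ψ 0, C 0, ρ0) hbase' hstep
  have hee : ∀ k, IsOpenEmbedding (st k).1 := fun k => (hP k).1
  have hKb : ∀ k, (st k).2.1 ⊆ (st k).1 '' ball 0 (st k).2.2 := fun k => (hP k).2.2.2.2.1
  have hCK : ∀ k, C k ⊆ (st k).2.1 := fun k => (hP k).2.2.2.1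
  have hρk : ∀ k : ℕ, ((k : ℝ) + 1) ≤ (st k).2.2 := fun k => (hP k).2.2.2.2.2
  have hagreeQ : ∀ k, ∀ y : E, ‖y‖ ≤ (st k).2.2 → (st (k + 1)).1 y = (st k).1 y :=
    fun k => (hQ k).1
  have hρQ : ∀ k, (st k).2.2 + 1 ≤ (st (k + 1)).2.2 := fun k => (hQ k).2
  have hρmono : ∀ {j k : ℕ}, j ≤ k → (st j).2.2 ≤ (st k).2.2 := by
    intro j k hjk
    induction k, hjk using Nat.le_induction with
    | base => exact le_refl _
    | succ k hk ih => exact le_trans ih (by linarith [hρQ k])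
  have hagree : ∀ j k, j ≤ k → ∀ y : E, ‖y‖ ≤ (st j).2.2 → (st k).1 y = (st j).1 y := by
    intro j k hjk
    induction k, hjk using Nat.le_induction with
    | base => intro y _; rfl
    | succ k hk ih =>
      intro y hy
      rw [hagreeQ k y (le_trans hy (hρmono hk)), ih y hy]
  set F : E → M := fun y => (st ⌈‖y‖⌉₊).1 y with hFdef
  have hNy : ∀ y : E, ‖y‖ ≤ (st ⌈‖y‖⌉₊).2.2 := by
    intro y
    calc ‖y‖ ≤ (⌈‖y‖⌉₊ : ℝ) := Nat.le_ceil _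
      _ ≤ (⌈‖y‖⌉₊ : ℝ) + 1 := by linarith
      _ ≤ _ := hρk _
  have hkey : ∀ (k) (y : E), ‖y‖ ≤ (st k).2.2 → F y = (st k).1 y := by
    intro k y hy
    have h1 : (st (max k ⌈‖y‖⌉₊)).1 y = (st ⌈‖y‖⌉₊).1 y :=
      hagree _ _ (le_max_right _ _) y (hNy y)
    have h2 : (st (max k ⌈‖y‖⌉₊)).1 y = (st k).1 y := hagree _ _ (le_max_left _ _) y hy
    show (st ⌈‖y‖⌉₊).1 y = (st k).1 y
    rw [← h1, h2]
  have hstrict : ∀ y : E, ‖y‖ < (st (⌈‖y‖⌉₊ + 1)).2.2 := by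
    intro y
    have h1 := hρk (⌈‖y‖⌉₊ + 1)
    push_cast at h1
    have h2 : ‖y‖ ≤ (⌈‖y‖⌉₊ : ℝ) := Nat.le_ceil _
    linarith
  have hFcont : Continuous F := by
    rw [continuous_iff_continuousAt]
    intro y
    have hy : y ∈ ball (0 : E) (st (⌈‖y‖⌉₊ + 1)).2.2 := by
      rw [mem_ball, dist_zero_right]; exact hstrict y
    refine ((hee (⌈‖y‖⌉₊ + 1)).continuous.continuousAt).congr ?_
    filter_upwards [isOpen_ball.mem_nhds hy] with z hz
    rw [mem_ball, dist_zero_right] at hz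
    exact (hkey _ z hz.le).symm
  have hFopen : IsOpenMap F := by
    intro O hO
    have him : F '' O = ⋃ k, (st k).1 '' (O ∩ ball 0 (st k).2.2) := by
      ext x
      constructor
      · rintro ⟨y, hyO, rfl⟩
        refine mem_iUnion.2 ⟨⌈‖y‖⌉₊ + 1, ⟨y, ⟨hyO, ?_⟩, (hkey _ y (hstrict y).le).symm⟩⟩
        rw [mem_ball, dist_zero_right]; exact hstrict y
      · intro hx
        obtain ⟨k, y, ⟨hyO, hyb⟩, rfl⟩ := mem_iUnion.1 hx
        rw [mem_ball, dist_zero_right] at hyb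
        exact ⟨y, hyO, (hkey k y hyb.le)⟩
    rw [him]
    exact isOpen_iUnion fun k => (hee k).isOpenMap _ (hO.inter isOpen_ball)
  have hFinj : Function.Injective F := by
    intro y z hyz
    have h1 : F y = (st (max ⌈‖y‖⌉₊ ⌈‖z‖⌉₊)).1 y :=
      hkey _ y (le_trans (hNy y) (hρmono (le_max_left _ _)))
    have h2 : F z = (st (max ⌈‖y‖⌉₊ ⌈‖z‖⌉₊)).1 z :=
      hkey _ z (le_trans (hNy z) (hρmono (le_max_right _ _)))
    exact (hee _).injective (by rw [← h1, ← h2, hyz])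
  have hFsurj : Function.Surjective F := by
    intro x
    obtain ⟨m, hm⟩ := hCcover x
    obtain ⟨y, hyb, rfl⟩ := hKb m (hCK m hm)
    rw [mem_ball, dist_zero_right] at hyb
    exact ⟨y, hkey m y hyb.le⟩
  exact ⟨(Equiv.toHomeomorphOfContinuousOpen
    (Equiv.ofBijective F ⟨hFinj, hFsurj⟩) hFcont hFopen).symm⟩
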